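/- Let κ₁, κ₂ be real wavenumbers with 0 < κ₁ < κ₂, and let α ∈ ℝ with |α| ≠ κ₁ and |α| ≠ κ₂. For j = 1, 2 define βⱼ ∈ ℂ by βⱼ := (κⱼ² − α²)^{1/2} if |α| < κⱼ and βⱼ := i(α² − κⱼ²)^{1/2} if |α| > κⱼ, and set χ := α² + β₁β₂. Then κ₁² < |χ| < κ₂². -/

import Mathlib

/-- Proposition A.1: with `βⱼ = (κⱼ² − α²)^{1/2}` for `|α| < κⱼ` and
`βⱼ = i(α² − κⱼ²)^{1/2}` for `|α| > κⱼ`, the DtN denominator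
`χ = α² + β₁β₂` satisfies `κ₁² < |χ| < κ₂²`. -/
theorem chi_bounds
    (κ₁ κ₂ α : ℝ) (hκ₁ : 0 < κ₁) (hκ₁₂ : κ₁ < κ₂)
    (hne₁ : |α| ≠ κ₁) (hne₂ : |α| ≠ κ₂)
    (β₁ β₂ χ : ℂ)
    (hβ₁ : β₁ = if |α| < κ₁ then (Real.sqrt (κ₁ ^ 2 - α ^ 2) : ℂ)
      else Complex.I * (Real.sqrt (α ^ 2 - κ₁ ^ 2) : ℂ))
    (hβ₂ : β₂ = if |α| < κ₂ then (Real.sqrt (κ₂ ^ 2 - α ^ 2) : ℂ)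
      else Complex.I * (Real.sqrt (α ^ 2 - κ₂ ^ 2) : ℂ))
    (hχ : χ = (α : ℂ) ^ 2 + β₁ * β₂) :
    κ₁ ^ 2 < ‖χ‖ ∧ ‖χ‖ < κ₂ ^ 2 := by
  have habs : 0 ≤ |α| := abs_nonneg α
  have hsqa : |α| ^ 2 = α ^ 2 := sq_abs α
  rcases lt_or_gt_of_ne hne₁ with h1 | h1
  · -- |α| < κ₁ < κ₂ : both propagating
    have h2 : |α| < κ₂ := h1.trans hκ₁₂
    have ha1 : α ^ 2 < κ₁ ^ 2 := by
      rw [← hsqa]; exact pow_lt_pow_left₀ h1 habs two_ne_zero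
    have ha2 : α ^ 2 < κ₂ ^ 2 := by
      rw [← hsqa]; exact pow_lt_pow_left₀ h2 habs two_ne_zero
    rw [hβ₁, hβ₂, if_pos h1, if_pos h2] at hχ
    have hχr : χ = ((α ^ 2 + Real.sqrt (κ₁ ^ 2 - α ^ 2) * Real.sqrt (κ₂ ^ 2 - α ^ 2) : ℝ) : ℂ) := by
      rw [hχ]; push_cast; ring
    have hs1 : 0 < κ₁ ^ 2 - α ^ 2 := by linarith
    have hs2 : κ₁ ^ 2 - α ^ 2 < κ₂ ^ 2 - α ^ 2 := by nlinarith
    have hsq : Real.sqrt (κ₁ ^ 2 - α ^ 2) < Real.sqrt (κ₂ ^ 2 - α ^ 2) :=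
      Real.sqrt_lt_sqrt hs1.le hs2
    have hspos : 0 < Real.sqrt (κ₁ ^ 2 - α ^ 2) := Real.sqrt_pos.mpr hs1
    have hmul1 : κ₁ ^ 2 - α ^ 2 < Real.sqrt (κ₁ ^ 2 - α ^ 2) * Real.sqrt (κ₂ ^ 2 - α ^ 2) := by
      nlinarith [Real.mul_self_sqrt hs1.le]
    have hmul2 : Real.sqrt (κ₁ ^ 2 - α ^ 2) * Real.sqrt (κ₂ ^ 2 - α ^ 2) < κ₂ ^ 2 - α ^ 2 := by
      nlinarith [Real.mul_self_sqrt (le_of_lt (hs1.trans hs2)), Real.sqrt_pos.mpr (hs1.trans hs2)]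
    have hpos : 0 ≤ α ^ 2 + Real.sqrt (κ₁ ^ 2 - α ^ 2) * Real.sqrt (κ₂ ^ 2 - α ^ 2) := by
      nlinarith [sq_nonneg α]
    rw [hχr, Complex.norm_real, Real.norm_eq_abs, abs_of_nonneg hpos]
    constructor <;> linarith
  rcases lt_or_gt_of_ne hne₂ with h2 | h2
  · -- κ₁ < |α| < κ₂ : mixed case
    have ha1 : κ₁ ^ 2 < α ^ 2 := by
      rw [← hsqa]; exact pow_lt_pow_left₀ h1 hκ₁.le two_ne_zero
    have ha2 : α ^ 2 < κ₂ ^ 2 := by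
      rw [← hsqa]; exact pow_lt_pow_left₀ h2 habs two_ne_zero
    rw [hβ₁, hβ₂, if_neg (not_lt.mpr h1.le), if_pos h2] at hχ
    have hχr : χ = ((α ^ 2 : ℝ) : ℂ) +
        ((Real.sqrt (α ^ 2 - κ₁ ^ 2) * Real.sqrt (κ₂ ^ 2 - α ^ 2) : ℝ) : ℂ) * Complex.I := by
      rw [hχ]; push_cast; ring
    have hs1 : 0 < α ^ 2 - κ₁ ^ 2 := by linarith
    have hs2 : 0 < κ₂ ^ 2 - α ^ 2 := by linarith
    have hsq : (Real.sqrt (α ^ 2 - κ₁ ^ 2) * Real.sqrt (κ₂ ^ 2 - α ^ 2)) ^ 2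
        = (α ^ 2 - κ₁ ^ 2) * (κ₂ ^ 2 - α ^ 2) := by
      rw [mul_pow, Real.sq_sqrt hs1.le, Real.sq_sqrt hs2.le]
    rw [hχr, Complex.norm_add_mul_I]
    have hX : (α ^ 2) ^ 2 + (Real.sqrt (α ^ 2 - κ₁ ^ 2) * Real.sqrt (κ₂ ^ 2 - α ^ 2)) ^ 2
        = (α ^ 2) ^ 2 + (α ^ 2 - κ₁ ^ 2) * (κ₂ ^ 2 - α ^ 2) := by rw [hsq]
    rw [hX]
    constructor
    · rw [Real.lt_sqrt (by positivity)]
      nlinarith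
    · rw [Real.sqrt_lt' (by nlinarith)]
      nlinarith
  · -- κ₂ < |α| : both evanescent
    have ha1 : κ₁ ^ 2 < α ^ 2 := by
      rw [← hsqa]; exact pow_lt_pow_left₀ h1 hκ₁.le two_ne_zero
    have ha2 : κ₂ ^ 2 < α ^ 2 := by
      rw [← hsqa]; exact pow_lt_pow_left₀ h2 (by linarith) two_ne_zero
    rw [hβ₁, hβ₂, if_neg (not_lt.mpr h1.le), if_neg (not_lt.mpr h2.le)] at hχ
    have hχr : χ = ((α ^ 2 - Real.sqrt (α ^ 2 - κ₁ ^ 2) * Real.sqrt (α ^ 2 - κ₂ ^ 2) : ℝ) : ℂ) := by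
      rw [hχ]; push_cast
      have : Complex.I * (Real.sqrt (α ^ 2 - κ₁ ^ 2) : ℂ) *
          (Complex.I * (Real.sqrt (α ^ 2 - κ₂ ^ 2) : ℂ))
          = (Complex.I * Complex.I) * ((Real.sqrt (α ^ 2 - κ₁ ^ 2) : ℂ) *
            (Real.sqrt (α ^ 2 - κ₂ ^ 2) : ℂ)) := by ring
      rw [this, Complex.I_mul_I]; ring
    have hs2 : 0 < α ^ 2 - κ₂ ^ 2 := by linarith
    have hs21 : α ^ 2 - κ₂ ^ 2 < α ^ 2 - κ₁ ^ 2 := by nlinarith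
    have hs1 : 0 < α ^ 2 - κ₁ ^ 2 := hs2.trans hs21
    have hsq : Real.sqrt (α ^ 2 - κ₂ ^ 2) < Real.sqrt (α ^ 2 - κ₁ ^ 2) :=
      Real.sqrt_lt_sqrt hs2.le hs21
    have hmul1 : Real.sqrt (α ^ 2 - κ₁ ^ 2) * Real.sqrt (α ^ 2 - κ₂ ^ 2) < α ^ 2 - κ₁ ^ 2 := by
      nlinarith [Real.mul_self_sqrt hs1.le, Real.sqrt_pos.mpr hs1]
    have hmul2 : α ^ 2 - κ₂ ^ 2 < Real.sqrt (α ^ 2 - κ₁ ^ 2) * Real.sqrt (α ^ 2 - κ₂ ^ 2) := by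
      nlinarith [Real.mul_self_sqrt hs2.le, Real.sqrt_pos.mpr hs2]
    have hpos : 0 ≤ α ^ 2 - Real.sqrt (α ^ 2 - κ₁ ^ 2) * Real.sqrt (α ^ 2 - κ₂ ^ 2) := by
      nlinarith [sq_nonneg κ₁]
    rw [hχr, Complex.norm_real, Real.norm_eq_abs, abs_of_nonneg hpos]
    constructor <;> linarith
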